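/- (Range of the spectral parameter.) Let N be a positive integer and s ∈ (0,1) with 2s < N. Then: (i) for every α ∈ [0, (N−2s)/2) one has 0 < γ_α ≤ Λ_{N,s}, with γ_0 = Λ_{N,s}; and (ii) for every λ ∈ (0, Λ_{N,s}] there exists exactly one α ∈ [0, (N−2s)/2) such that γ_α = λ. -/

import Mathlib

open MeasureTheory Real
open Filter Topology Finset

section GammaRangeAux

open Filter Topology Finset Real

lemma contAt_Gamma {x : ℝ} (hx : 0 < x) : ContinuousAt Real.Gamma x := by
  refine (Real.differentiableAt_Gamma fun m => ?_).continuousAt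
  have : (0:ℝ) ≤ m := Nat.cast_nonneg m
  intro h; rw [h] at hx; linarith

noncomputable def Lfun (p q t : ℝ) : ℝ :=
  Real.Gamma (p + t) * Real.Gamma (p - t) * Real.Gamma q ^ 2 /
    (Real.Gamma (q + t) * Real.Gamma (q - t) * Real.Gamma p ^ 2)

noncomputable def gfac (p q : ℝ) (j : ℕ) (t : ℝ) : ℝ :=
  ((q + t + j) * (q - t + j) * (p + j) ^ 2) / ((p + t + j) * (p - t + j) * (q + j) ^ 2)

lemma gfac_pos {p q t : ℝ} (hq : 0 < q) (hpq : q < p) (ht0 : 0 ≤ t) (htq : t < q) (j : ℕ) :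
    0 < gfac p q j t := by
  have hj : (0:ℝ) ≤ j := Nat.cast_nonneg j
  unfold gfac
  have h1 : 0 < q + t + j := by linarith
  have h2 : 0 < q - t + j := by linarith
  have h3 : 0 < p + j := by linarith
  have h4 : 0 < p + t + j := by linarith
  have h5 : 0 < p - t + j := by linarith
  have h6 : 0 < q + j := by linarith
  positivity

lemma gfac_lt {p q a b : ℝ} (hq : 0 < q) (hpq : q < p) (ha : 0 ≤ a) (hab : a < b)
    (hb : b < q) (j : ℕ) : gfac p q j b < gfac p q j a := by
  have hj : (0:ℝ) ≤ j := Nat.cast_nonneg j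
  have hu : 0 < q + j := by linarith
  have hv : 0 < p + j := by linarith
  have huv : q + j < p + j := by linarith
  have hbu : b < q + j := by linarith
  unfold gfac
  have d1 : 0 < (p + b + j) * (p - b + j) * (q + j)^2 := by
    have e1 : 0 < p + b + (j:ℝ) := by linarith
    have e2 : 0 < p - b + (j:ℝ) := by linarith
    positivity
  have d2 : 0 < (p + a + j) * (p - a + j) * (q + j)^2 := by
    have e1 : 0 < p + a + (j:ℝ) := by linarith
    have e2 : 0 < p - a + (j:ℝ) := by linarith
    positivity
  rw [div_lt_div_iff₀ d1 d2]
  have key : 0 < ((q+j)*(q+j)) * ((p+j)*(p+j)) * ((b^2 - a^2) * ((p+j)^2 - (q+j)^2)) := by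
    have h1 : 0 < b^2 - a^2 := by nlinarith
    have h2 : 0 < (p+j)^2 - (q+j)^2 := by nlinarith
    positivity
  nlinarith [key]


lemma gammaSeq_comb_eq {p q t : ℝ} (hq : 0 < q) (hpq : q < p) (ht0 : 0 ≤ t) (htq : t < q)
    {n : ℕ} (hn : 1 ≤ n) :
    Real.GammaSeq (p + t) n * Real.GammaSeq (p - t) n * Real.GammaSeq q n ^ 2 /
      (Real.GammaSeq (q + t) n * Real.GammaSeq (q - t) n * Real.GammaSeq p n ^ 2) =
    ∏ j ∈ Finset.range (n + 1), gfac p q j t := by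
  have hn' : (0:ℝ) < n := by exact_mod_cast hn
  have hA : ∀ x : ℝ, 0 < x → 0 < ∏ j ∈ Finset.range (n + 1), (x + j) := by
    intro x hx
    exact Finset.prod_pos fun j _ => by positivity
  have hApt := hA (p + t) (by linarith)
  have hApmt := hA (p - t) (by linarith)
  have hAq := hA q hq
  have hAp := hA p (by linarith)
  have hAqt := hA (q + t) (by linarith)
  have hAqmt := hA (q - t) (by linarith)
  have hfac : (0:ℝ) < (n.factorial) := by positivity
  have hpow : ∀ x : ℝ, 0 < (n:ℝ) ^ x := fun x => Real.rpow_pos_of_pos hn' x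
  have key : (n:ℝ) ^ (p + t) * (n:ℝ) ^ (p - t) * ((n:ℝ) ^ q) ^ 2 =
      (n:ℝ) ^ (q + t) * (n:ℝ) ^ (q - t) * ((n:ℝ) ^ p) ^ 2 := by
    rw [sq, sq, ← Real.rpow_add hn', ← Real.rpow_add hn', ← Real.rpow_add hn',
      ← Real.rpow_add hn', ← Real.rpow_add hn', ← Real.rpow_add hn']
    ring_nf
  have hrhs : ∏ j ∈ Finset.range (n + 1), gfac p q j t =
      ((∏ j ∈ Finset.range (n + 1), (q + t + j)) * (∏ j ∈ Finset.range (n + 1), (q - t + j)) *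
        (∏ j ∈ Finset.range (n + 1), (p + j)) ^ 2) /
      ((∏ j ∈ Finset.range (n + 1), (p + t + j)) * (∏ j ∈ Finset.range (n + 1), (p - t + j)) *
        (∏ j ∈ Finset.range (n + 1), (q + j)) ^ 2) := by
    simp [gfac, Finset.prod_div_distrib, Finset.prod_mul_distrib, Finset.prod_pow]
  rw [hrhs, Real.GammaSeq, Real.GammaSeq, Real.GammaSeq, Real.GammaSeq, Real.GammaSeq,
    Real.GammaSeq]
  rw [div_eq_div_iff (by positivity) (by positivity)]
  field_simp
  linear_combination key

lemma Lfun_pos {p q t : ℝ} (hq : 0 < q) (hpq : q < p) (ht0 : 0 ≤ t) (htq : t < q) :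
    0 < Lfun p q t := by
  unfold Lfun
  have h1 := Real.Gamma_pos_of_pos (show (0:ℝ) < p + t by linarith)
  have h2 := Real.Gamma_pos_of_pos (show (0:ℝ) < p - t by linarith)
  have h3 := Real.Gamma_pos_of_pos hq
  have h4 := Real.Gamma_pos_of_pos (show (0:ℝ) < q + t by linarith)
  have h5 := Real.Gamma_pos_of_pos (show (0:ℝ) < q - t by linarith)
  have h6 := Real.Gamma_pos_of_pos (show (0:ℝ) < p by linarith)
  positivity

lemma Lfun_zero {p q : ℝ} (hq : 0 < q) (hpq : q < p) : Lfun p q 0 = 1 := by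
  unfold Lfun
  have h3 := Real.Gamma_pos_of_pos hq
  have h6 := Real.Gamma_pos_of_pos (show (0:ℝ) < p by linarith)
  rw [add_zero, sub_zero, add_zero, sub_zero]
  field_simp

lemma tendsto_prod_Lfun {p q t : ℝ} (hq : 0 < q) (hpq : q < p) (ht0 : 0 ≤ t) (htq : t < q) :
    Tendsto (fun n => ∏ j ∈ Finset.range (n + 1), gfac p q j t) atTop (𝓝 (Lfun p q t)) := by
  have hne : Real.Gamma (q + t) * Real.Gamma (q - t) * Real.Gamma p ^ 2 ≠ 0 := by
    have h4 := Real.Gamma_pos_of_pos (show (0:ℝ) < q + t by linarith)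
    have h5 := Real.Gamma_pos_of_pos (show (0:ℝ) < q - t by linarith)
    have h6 := Real.Gamma_pos_of_pos (show (0:ℝ) < p by linarith)
    positivity
  have h1 : Tendsto (fun n => Real.GammaSeq (p + t) n * Real.GammaSeq (p - t) n *
      Real.GammaSeq q n ^ 2 /
      (Real.GammaSeq (q + t) n * Real.GammaSeq (q - t) n * Real.GammaSeq p n ^ 2)) atTop
      (𝓝 (Lfun p q t)) := by
    exact (((Real.GammaSeq_tendsto_Gamma _).mul (Real.GammaSeq_tendsto_Gamma _)).mul
      ((Real.GammaSeq_tendsto_Gamma q).pow 2)).div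
      (((Real.GammaSeq_tendsto_Gamma _).mul (Real.GammaSeq_tendsto_Gamma _)).mul
      ((Real.GammaSeq_tendsto_Gamma p).pow 2)) hne
  refine h1.congr' ?_
  filter_upwards [eventually_ge_atTop 1] with n hn
  exact gammaSeq_comb_eq hq hpq ht0 htq hn

lemma Lfun_strict_anti {p q a b : ℝ} (hq : 0 < q) (hpq : q < p) (ha : 0 ≤ a) (hab : a < b)
    (hb : b < q) : Lfun p q b < Lfun p q a := by
  set c : ℝ := gfac p q 0 b / gfac p q 0 a with hc
  have hga := gfac_pos hq hpq ha (hab.trans hb) 0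
  have hgb := gfac_pos hq hpq (ha.trans hab.le) hb 0
  have hc1 : c < 1 := (div_lt_one hga).2 (gfac_lt hq hpq ha hab hb 0)
  have hc0 : 0 < c := div_pos hgb hga
  have hbound : ∀ n : ℕ, ∏ j ∈ Finset.range (n + 1), gfac p q j b ≤
      c * ∏ j ∈ Finset.range (n + 1), gfac p q j a := by
    intro n
    rw [Finset.prod_range_succ', Finset.prod_range_succ']
    have h2 : ∏ j ∈ Finset.range n, gfac p q (j + 1) b ≤
        ∏ j ∈ Finset.range n, gfac p q (j + 1) a := by
      refine Finset.prod_le_prod (fun j _ => (gfac_pos hq hpq (ha.trans hab.le) hb _).le)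
        (fun j _ => (gfac_lt hq hpq ha hab hb _).le)
    have h3 : (0:ℝ) ≤ ∏ j ∈ Finset.range n, gfac p q (j + 1) b :=
      Finset.prod_nonneg fun j _ => (gfac_pos hq hpq (ha.trans hab.le) hb _).le
    have hcg : gfac p q 0 b = c * gfac p q 0 a := by
      rw [hc]; field_simp
    calc (∏ j ∈ Finset.range n, gfac p q (j + 1) b) * gfac p q 0 b
        ≤ (∏ j ∈ Finset.range n, gfac p q (j + 1) a) * gfac p q 0 b := by
          exact mul_le_mul_of_nonneg_right h2 hgb.le
      _ = c * ((∏ j ∈ Finset.range n, gfac p q (j + 1) a) * gfac p q 0 a) := by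
          rw [hcg]; ring
  have hle : Lfun p q b ≤ c * Lfun p q a :=
    le_of_tendsto_of_tendsto' (tendsto_prod_Lfun hq hpq (ha.trans hab.le) hb)
      ((tendsto_prod_Lfun hq hpq ha (hab.trans hb)).const_mul c) hbound
  have hLa := Lfun_pos hq hpq ha (hab.trans hb)
  nlinarith

lemma contAt_Lfun {p q t : ℝ} (hq : 0 < q) (hpq : q < p) (ht0 : 0 ≤ t) (htq : t < q) :
    ContinuousAt (Lfun p q) t := by
  have h4 := Real.Gamma_pos_of_pos (show (0:ℝ) < q + t by linarith)
  have h5 := Real.Gamma_pos_of_pos (show (0:ℝ) < q - t by linarith)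
  have h6 := Real.Gamma_pos_of_pos (show (0:ℝ) < p by linarith)
  refine ContinuousAt.div ?_ ?_ (by positivity)
  · exact ((((contAt_Gamma (show (0:ℝ) < p + t by linarith)).comp
      ((continuous_const.add continuous_id).continuousAt)).mul
      ((contAt_Gamma (show (0:ℝ) < p - t by linarith)).comp
      ((continuous_const.sub continuous_id).continuousAt))).mul continuousAt_const)
  · exact ((((contAt_Gamma (show (0:ℝ) < q + t by linarith)).comp
      ((continuous_const.add continuous_id).continuousAt)).mul
      ((contAt_Gamma (show (0:ℝ) < q - t by linarith)).comp
      ((continuous_const.sub continuous_id).continuousAt))).mul continuousAt_const)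

lemma tendsto_inv_Gamma_zero : Tendsto (fun x : ℝ => (Real.Gamma x)⁻¹) (𝓝[>] 0) (𝓝 0) := by
  have h1 : Tendsto (fun x : ℝ => x / Real.Gamma (x + 1)) (𝓝[>] 0) (𝓝 0) := by
    have hΓ : Tendsto (fun x : ℝ => Real.Gamma (x + 1)) (𝓝[>] 0) (𝓝 1) := by
      have h0 : Tendsto (fun x : ℝ => x + 1) (𝓝 (0:ℝ)) (𝓝 1) := by
        exact (continuous_add_right (1:ℝ)).tendsto' 0 1 (by norm_num)
      have h := (((contAt_Gamma one_pos).tendsto.comp h0).mono_left (nhdsWithin_le_nhds :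
          𝓝[>] (0:ℝ) ≤ 𝓝 0))
      rw [Real.Gamma_one] at h; exact h
    have hid : Tendsto (fun x : ℝ => x) (𝓝[>] (0:ℝ)) (𝓝 0) :=
      Filter.Tendsto.mono_left tendsto_id nhdsWithin_le_nhds
    have h := hid.div hΓ one_ne_zero
    rw [zero_div] at h; exact h
  refine h1.congr' ?_
  filter_upwards [self_mem_nhdsWithin] with x (hx : 0 < x)
  have hΓ := Real.Gamma_pos_of_pos hx
  rw [Real.Gamma_add_one hx.ne']
  field_simp

lemma tendsto_Lfun_zero {p q : ℝ} (hq : 0 < q) (hpq : q < p) :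
    Tendsto (Lfun p q) (𝓝[<] q) (𝓝 0) := by
  have hmap : Tendsto (fun t : ℝ => q - t) (𝓝[<] q) (𝓝[>] 0) := by
    refine tendsto_nhdsWithin_of_tendsto_nhds_of_eventually_within _ ?_ ?_
    · have : Tendsto (fun t : ℝ => q - t) (𝓝 q) (𝓝 (q - q)) :=
        (continuous_const.sub continuous_id).continuousAt
      simpa using this.mono_left nhdsWithin_le_nhds
    · filter_upwards [self_mem_nhdsWithin] with x (hx : x < q)
      simpa using hx
  have h2 : Tendsto (fun t => (Real.Gamma (q - t))⁻¹) (𝓝[<] q) (𝓝 0) :=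
    tendsto_inv_Gamma_zero.comp hmap
  have h1 : Tendsto (fun t => Real.Gamma (p + t) * Real.Gamma (p - t) * Real.Gamma q ^ 2 /
      (Real.Gamma (q + t) * Real.Gamma p ^ 2)) (𝓝[<] q) (𝓝
      (Real.Gamma (p + q) * Real.Gamma (p - q) * Real.Gamma q ^ 2 /
      (Real.Gamma (q + q) * Real.Gamma p ^ 2))) := by
    have h4 := Real.Gamma_pos_of_pos (show (0:ℝ) < q + q by linarith)
    have h6 := Real.Gamma_pos_of_pos (show (0:ℝ) < p by linarith)
    refine (ContinuousAt.div ?_ ?_ (by positivity)).tendsto.mono_left nhdsWithin_le_nhds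
    · exact ((((contAt_Gamma (show (0:ℝ) < p + q by linarith)).comp
        ((continuous_const.add continuous_id).continuousAt)).mul
        ((contAt_Gamma (show (0:ℝ) < p - q by linarith)).comp
        ((continuous_const.sub continuous_id).continuousAt))).mul continuousAt_const)
    · exact (((contAt_Gamma (show (0:ℝ) < q + q by linarith)).comp
        ((continuous_const.add continuous_id).continuousAt)).mul continuousAt_const)
  have := h1.mul h2
  rw [mul_zero] at this
  refine this.congr ?_
  intro t
  unfold Lfun
  ring

end GammaRangeAux


/-- The optimal fractional Hardy constant `Λ_{N,s}`. -/
noncomputable def LambdaNS (N : ℕ) (s : ℝ) : ℝ :=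
  2 ^ (2 * s) * (Real.Gamma (((N : ℝ) + 2 * s) / 4)) ^ 2 /
    (Real.Gamma (((N : ℝ) - 2 * s) / 4)) ^ 2

/-- The spectral function `γ_α` associated to the fractional Hardy operator. -/
noncomputable def gammaB (N : ℕ) (s α : ℝ) : ℝ :=
  2 ^ (2 * s) * Real.Gamma (((N : ℝ) + 2 * s + 2 * α) / 4) *
      Real.Gamma (((N : ℝ) + 2 * s - 2 * α) / 4) /
    (Real.Gamma (((N : ℝ) - 2 * s + 2 * α) / 4) *
      Real.Gamma (((N : ℝ) - 2 * s - 2 * α) / 4))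

/-- Range of the spectral parameter: `γ` maps `[0,(N-2s)/2)` onto `(0, Λ_{N,s}]`
bijectively, with `γ_0 = Λ_{N,s}`. -/
theorem gamma_range_spectral_parameter (N : ℕ) (hN : 0 < N) (s : ℝ)
    (hs0 : 0 < s) (hs1 : s < 1) (hsN : 2 * s < N) :
    (∀ α : ℝ, 0 ≤ α → α < ((N : ℝ) - 2 * s) / 2 →
      0 < gammaB N s α ∧ gammaB N s α ≤ LambdaNS N s) ∧
    gammaB N s 0 = LambdaNS N s ∧
    (∀ l : ℝ, 0 < l → l ≤ LambdaNS N s →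
      ∃! α : ℝ, (0 ≤ α ∧ α < ((N : ℝ) - 2 * s) / 2) ∧ gammaB N s α = l) := by
  set p : ℝ := ((N : ℝ) + 2 * s) / 4 with hp
  set q : ℝ := ((N : ℝ) - 2 * s) / 4 with hqdef
  have hq : 0 < q := by rw [hqdef]; linarith
  have hpq : q < p := by rw [hp, hqdef]; linarith
  have hp0 : 0 < p := lt_trans hq hpq
  have h2q : ((N : ℝ) - 2 * s) / 2 = 2 * q := by rw [hqdef]; ring
  have hQ := Real.Gamma_pos_of_pos hq
  have hP := Real.Gamma_pos_of_pos hp0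
  have hΛ : 0 < LambdaNS N s := by
    unfold LambdaNS
    positivity
  have hgB : ∀ α : ℝ, gammaB N s α = LambdaNS N s * Lfun p q (α / 2) := by
    intro α
    unfold gammaB LambdaNS Lfun
    have e1 : ((N : ℝ) + 2 * s + 2 * α) / 4 = p + α / 2 := by rw [hp]; ring
    have e2 : ((N : ℝ) + 2 * s - 2 * α) / 4 = p - α / 2 := by rw [hp]; ring
    have e3 : ((N : ℝ) - 2 * s + 2 * α) / 4 = q + α / 2 := by rw [hqdef]; ring
    have e4 : ((N : ℝ) - 2 * s - 2 * α) / 4 = q - α / 2 := by rw [hqdef]; ring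
    rw [e1, e2, e3, e4, ← hp, ← hqdef]
    have key : ∀ A B C D E F : ℝ, E ≠ 0 → F ≠ 0 →
        2 ^ (2*s) * A * B / (C * D) =
          2 ^ (2*s) * E ^ 2 / F ^ 2 * (A * B * F ^ 2 / (C * D * E ^ 2)) := by
      intro A B C D E F hE hF
      rcases eq_or_ne (C * D) 0 with h | h
      · rw [h, zero_mul, div_zero, div_zero, mul_zero]
      · field_simp
    exact key _ _ _ _ _ _ hP.ne' hQ.ne'
  have hmono : ∀ a b : ℝ, 0 ≤ a → a < b → b < 2 * q → gammaB N s b < gammaB N s a := by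
    intro a b ha hab hb
    rw [hgB a, hgB b]
    refine (mul_lt_mul_iff_right₀ hΛ).2 (Lfun_strict_anti hq hpq (by linarith) (by linarith)
      (by linarith))
  have hzero : gammaB N s 0 = LambdaNS N s := by
    rw [hgB 0]
    norm_num [Lfun_zero hq hpq]
  refine ⟨?_, hzero, ?_⟩
  · intro α hα0 hα
    rw [h2q] at hα
    constructor
    · rw [hgB α]
      exact mul_pos hΛ (Lfun_pos hq hpq (by linarith) (by linarith))
    · rcases eq_or_lt_of_le hα0 with h | h
      · rw [← h, hzero]
      · exact le_of_lt (by rw [← hzero]; exact hmono 0 α le_rfl h (by linarith))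
  · intro l hl0 hlΛ
    have hcont : ∀ β : ℝ, 0 ≤ β → β < 2 * q → ContinuousOn (gammaB N s) (Set.Icc 0 β) := by
      intro β hβ0 hβ
      have : ContinuousOn (fun α : ℝ => LambdaNS N s * Lfun p q (α / 2)) (Set.Icc 0 β) := by
        intro x hx
        obtain ⟨hx0, hxβ⟩ := hx
        have h1 : ContinuousAt (fun α : ℝ => Lfun p q (α / 2)) x :=
          (contAt_Lfun hq hpq (by linarith) (by linarith)).comp
            ((continuous_id.div_const 2).continuousAt)
        exact (continuousAt_const.mul h1).continuousWithinAt
      exact this.congr fun x _ => hgB x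
    have hexists : ∃ α : ℝ, (0 ≤ α ∧ α < ((N : ℝ) - 2 * s) / 2) ∧ gammaB N s α = l := by
      rcases eq_or_lt_of_le hlΛ with heq | hlt
      · exact ⟨0, ⟨le_rfl, by rw [h2q]; linarith⟩, by rw [hzero, heq]⟩
      · -- find β < 2q with gammaB β < l
        have htend : Tendsto (fun α : ℝ => gammaB N s α) (𝓝[<] (2 * q)) (𝓝 0) := by
          have hhalf : Tendsto (fun α : ℝ => α / 2) (𝓝[<] (2 * q)) (𝓝[<] q) := by
            refine tendsto_nhdsWithin_of_tendsto_nhds_of_eventually_within _ ?_ ?_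
            · have : Tendsto (fun α : ℝ => α / 2) (𝓝 (2 * q)) (𝓝 (2 * q / 2)) :=
                (continuous_id.div_const 2).continuousAt
              rw [show 2 * q / 2 = q by ring] at this
              exact this.mono_left nhdsWithin_le_nhds
            · filter_upwards [self_mem_nhdsWithin] with x (hx : x < 2 * q)
              simpa using by linarith
          have := ((tendsto_Lfun_zero hq hpq).comp hhalf).const_mul (LambdaNS N s)
          rw [mul_zero] at this
          refine this.congr fun α => (hgB α).symm
        have hev : ∀ᶠ β in 𝓝[<] (2 * q), gammaB N s β < l ∧ β ∈ Set.Ioo 0 (2 * q) := by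
          refine (htend.eventually_lt_const hl0).and ?_
          exact Ioo_mem_nhdsLT_of_mem ⟨by linarith, le_rfl⟩
        obtain ⟨β, hβl, hβ0, hβ2q⟩ := hev.exists
        have hIcc : l ∈ Set.Icc (gammaB N s β) (gammaB N s 0) := by
          constructor
          · exact le_of_lt hβl
          · rw [hzero]; exact hlΛ
        obtain ⟨α, hαmem, hαl⟩ := intermediate_value_Icc' hβ0.le
          (hcont β hβ0.le hβ2q) hIcc
        exact ⟨α, ⟨hαmem.1, by rw [h2q]; linarith [hαmem.2]⟩, hαl⟩
    obtain ⟨α, hα, hαl⟩ := hexists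
    refine ⟨α, ⟨hα, hαl⟩, ?_⟩
    rintro α' ⟨⟨hα'0, hα'lt⟩, hα'l⟩
    rw [h2q] at hα'lt
    obtain ⟨⟨hα0, hαlt⟩, _⟩ := And.intro hα hαl
    rw [h2q] at hαlt
    by_contra hne
    rcases lt_trichotomy α' α with h | h | h
    · have := hmono α' α hα'0 h hαlt
      rw [hαl, hα'l] at this; exact lt_irrefl l this
    · exact hne h
    · have := hmono α α' hα0 h hα'lt
      rw [hαl, hα'l] at this; exact lt_irrefl l this
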